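/- Correlation weight factorization. Let K = Σ⁻¹ be adapted to G = (V,E), let Ω be the correlation matrix of X_V, and let π be a path between x and y in G with P = V(π). Then ω(π,Ω) = ω(π, Ω_{[P|P̄]}) × IF_P / √(IF_x^{P̄} · IF_y^{P̄}). -/

import Mathlib

open Matrix BigOperators Finset

variable {V : Type*} [Fintype V] [DecidableEq V]

/-- Submatrix of `M` with rows indexed by `A` and columns indexed by `B`. -/
noncomputable def subm (M : Matrix V V ℝ) (A B : Finset V) : Matrix ↥A ↥B ℝ :=
  Matrix.of fun i j => M i.1 j.1

/-- Partial covariance matrix `Σ_{AA·B}` of `A` given a disjoint set `B`. -/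
noncomputable def pcovOn (M : Matrix V V ℝ) (A B : Finset V) : Matrix ↥A ↥A ℝ :=
  subm M A A - subm M A B * (subm M B B)⁻¹ * subm M B A

/-- Partial covariance matrix `Σ_{AA·Ā}` given the complement of `A`. -/
noncomputable def pcov (M : Matrix V V ℝ) (A : Finset V) : Matrix ↥A ↥A ℝ :=
  pcovOn M A Aᶜ

/-- Inflation factor of `A` on `B`. -/
noncomputable def inflF (M : Matrix V V ℝ) (A B : Finset V) : ℝ :=
  ((subm M A A).det * (subm M B B).det) / (subm M (A ∪ B) (A ∪ B)).det

/-- The path weight `ω(π, Γ)` of a walk `p`, computed from `Θ = Γ⁻¹`. -/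
noncomputable def pathWeight (Γ : Matrix V V ℝ) {G : SimpleGraph V} {x y : V}
    (p : G.Walk x y) : ℝ :=
  (-1 : ℝ) ^ (p.support.toFinset.card + 1) *
    ((subm Γ⁻¹ p.support.toFinsetᶜ p.support.toFinsetᶜ).det / Γ⁻¹.det) *
    (p.darts.map fun d => Γ⁻¹ d.toProd.1 d.toProd.2).prod

/-- The partial covariance weight `ω(π, Σ_{AA·Ā})` of a walk `p` with vertices in `A`,
expressed via `K = Σ⁻¹`: `(−1)^{|P|+1} (det K_{A∖P,A∖P}/det K_AA) ∏ κ_uv`. -/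
noncomputable def partialPathWeight (S : Matrix V V ℝ) (A : Finset V) {G : SimpleGraph V}
    {x y : V} (p : G.Walk x y) : ℝ :=
  (-1 : ℝ) ^ (p.support.toFinset.card + 1) *
    ((subm S⁻¹ (A \ p.support.toFinset) (A \ p.support.toFinset)).det /
      (subm S⁻¹ A A).det) *
    (p.darts.map fun d => S⁻¹ d.toProd.1 d.toProd.2).prod

/-- `K` is adapted to `G` when nonzero off-diagonal entries correspond to edges. -/
def Adapted (K : Matrix V V ℝ) (G : SimpleGraph V) : Prop :=
  ∀ u v : V, u ≠ v → K u v ≠ 0 → G.Adj u v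

/-- Correlation-type scaling of a positive definite matrix. -/
noncomputable def corrScale {ι : Type*} (M : Matrix ι ι ℝ) : Matrix ι ι ℝ :=
  Matrix.of fun i j => M i j / (Real.sqrt (M i i) * Real.sqrt (M j j))

/-- The inflated correlation matrix `Φ^V = diag(K)^{1/2} Σ diag(K)^{1/2}`. -/
noncomputable def inflCorr (S : Matrix V V ℝ) : Matrix V V ℝ :=
  Matrix.of fun u v => Real.sqrt (S⁻¹ u u) * S u v * Real.sqrt (S⁻¹ v v)

/-- The weight `ω(π, M)` of a walk `p` whose vertices lie in `P`, computed in the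
induced subgraph from a matrix `M` indexed by `P`; here `V(π) = P`, so the determinant
factor (over the empty set) is `1`. -/
noncomputable def subPathWeight {P : Finset V} (M : Matrix ↥P ↥P ℝ) {G : SimpleGraph V}
    {x y : V} (p : G.Walk x y) (hp : ∀ v ∈ p.support, v ∈ P) : ℝ :=
  (-1 : ℝ) ^ (p.support.toFinset.card + 1) * (1 / M⁻¹.det) *
    (p.darts.attach.map fun d =>
      M⁻¹ ⟨d.1.toProd.1, hp _ (SimpleGraph.Walk.dart_fst_mem_support_of_mem_darts p d.2)⟩
          ⟨d.1.toProd.2, hp _ (SimpleGraph.Walk.dart_snd_mem_support_of_mem_darts p d.2)⟩).prod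

/-- Product of partial correlations `ρ_{uv·V∖{u,v}} = −κ_uv/(√κ_uu √κ_vv)`
over the edges of a walk. -/
noncomputable def prodPartialCorr (S : Matrix V V ℝ) {G : SimpleGraph V} {x y : V}
    (p : G.Walk x y) : ℝ :=
  (p.darts.map fun d => -(corrScale S⁻¹ d.toProd.1 d.toProd.2)).prod

/-- A walk is chordless if every edge of `G` joining two of its vertices is an edge of
the walk. -/
def Chordless {G : SimpleGraph V} {x y : V} (p : G.Walk x y) : Prop :=
  ∀ u v : V, u ∈ p.support → v ∈ p.support → G.Adj u v → s(u, v) ∈ p.edges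

/-- The quantity `φ(π, R) = det((I−R)_{P̄P̄}) ∏ ρ_{uv·V∖{u,v}}`. -/
noncomputable def phiWeight (S : Matrix V V ℝ) {G : SimpleGraph V} {x y : V}
    (p : G.Walk x y) : ℝ :=
  (subm (corrScale S⁻¹) p.support.toFinsetᶜ p.support.toFinsetᶜ).det * prodPartialCorr S p

section Helpers

lemma posDef_diag_pos {ι : Type*} [Fintype ι] [DecidableEq ι] {M : Matrix ι ι ℝ}
    (hM : M.PosDef) (i : ι) : 0 < M i i := by
  have h := hM.dotProduct_mulVec_pos (x := Pi.single i 1) (by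
    intro h
    have := congrFun h i
    simp [Pi.single_apply] at this)
  simpa [dotProduct, mulVec, Pi.single_apply, mul_ite, ite_mul, Finset.sum_ite_eq,
    Finset.sum_ite_eq'] using h

lemma subm_posDef {S : Matrix V V ℝ} (hS : S.PosDef) (A : Finset V) :
    (subm S A A).PosDef := by
  refine Matrix.PosDef.of_dotProduct_mulVec_pos ?_ ?_
  · ext i j
    have := congrFun (congrFun hS.1 j.1) i.1
    simpa [subm, Matrix.conjTranspose_apply] using this.symm
  · intro x hx
    set y : V → ℝ := fun v => if h : v ∈ A then x ⟨v, h⟩ else 0 with hy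
    have yval : ∀ (w : ↥A), y w.1 = x w := fun w => by simp [hy, w.2]
    have hy0 : y ≠ 0 := by
      intro h
      apply hx
      ext i
      have := congrFun h i.1
      simpa [hy, i.2] using this
    have inner : ∀ v, ∑ w : ↥A, S v w.1 * x w = ∑ w, S v w * y w := by
      intro v
      rw [show (∑ w : ↥A, S v w.1 * x w) = ∑ w : ↥A, S v w.1 * y w.1 from
        Finset.sum_congr rfl fun w _ => by rw [yval]]
      rw [Finset.sum_coe_sort A (fun w => S v w * y w)]
      exact Finset.sum_subset (Finset.subset_univ A) (fun w _ hw => by simp [hy, hw])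
    have key : dotProduct (star x) (subm S A A *ᵥ x) = dotProduct (star y) (S *ᵥ y) := by
      calc dotProduct (star x) (subm S A A *ᵥ x)
          = ∑ v : ↥A, x v * ∑ w : ↥A, S v.1 w.1 * x w := by
            simp [dotProduct, mulVec, subm]
        _ = ∑ v : ↥A, y v.1 * ∑ w, S v.1 w * y w := by
            refine Finset.sum_congr rfl fun v _ => by rw [yval, inner]
        _ = ∑ v ∈ A, y v * ∑ w, S v w * y w :=
            Finset.sum_coe_sort A (fun v => y v * ∑ w, S v w * y w)
        _ = ∑ v, y v * ∑ w, S v w * y w :=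
            Finset.sum_subset (Finset.subset_univ A) (fun v _ hv => by simp [hy, hv])
        _ = dotProduct (star y) (S *ᵥ y) := by simp [dotProduct, mulVec]
    rw [key]
    exact hS.dotProduct_mulVec_pos hy0

/-- equiv between a disjoint union of finsets and their union -/
def unionEquiv (A B : Finset V) (h : Disjoint A B) : ↥A ⊕ ↥B ≃ ↥(A ∪ B) where
  toFun := Sum.elim (fun a => ⟨a.1, Finset.mem_union_left _ a.2⟩)
    (fun b => ⟨b.1, Finset.mem_union_right _ b.2⟩)
  invFun v := if hv : v.1 ∈ A then .inl ⟨v.1, hv⟩ else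
    .inr ⟨v.1, (Finset.mem_union.mp v.2).resolve_left hv⟩
  left_inv s := by
    rcases s with a | b
    · simp [a.2]
    · have : b.1 ∉ A := fun hb => (Finset.disjoint_left.mp h) hb b.2
      simp [this]
  right_inv v := by by_cases hv : v.1 ∈ A <;> simp [hv]

def toV (A : Finset V) : ↥A ⊕ ↥(Aᶜ) ≃ V :=
  (unionEquiv A Aᶜ disjoint_compl_right).trans
    ((Equiv.subtypeEquivRight (fun v => by simp)).trans
      (Equiv.subtypeUnivEquiv fun v => Finset.mem_univ v))

lemma submatrix_toV (M : Matrix V V ℝ) (A : Finset V) :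
    M.submatrix (toV A) (toV A) =
      Matrix.fromBlocks (subm M A A) (subm M A Aᶜ) (subm M Aᶜ A) (subm M Aᶜ Aᶜ) := by
  ext (i | i) (j | j) <;> rfl

lemma submatrix_unionEquiv (M : Matrix V V ℝ) (A B : Finset V) (h : Disjoint A B) :
    (subm M (A ∪ B) (A ∪ B)).submatrix (unionEquiv A B h) (unionEquiv A B h) =
      Matrix.fromBlocks (subm M A A) (subm M A B) (subm M B A) (subm M B B) := by
  ext (i | i) (j | j) <;> rfl

lemma det_subm_univ (M : Matrix V V ℝ) :
    (subm M Finset.univ Finset.univ).det = M.det := by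
  rw [show subm M Finset.univ Finset.univ
      = M.submatrix (Equiv.subtypeUnivEquiv (fun v => Finset.mem_univ v))
        (Equiv.subtypeUnivEquiv (fun v => Finset.mem_univ v)) from rfl]
  exact Matrix.det_submatrix_equiv_self _ _

lemma det_subm_congr (M : Matrix V V ℝ) {A B : Finset V} (h : A = B) :
    (subm M A A).det = (subm M B B).det := by subst h; rfl

section Schur
variable {S : Matrix V V ℝ}

lemma KS_blocks (hS : S.PosDef) (A : Finset V) :
    (subm S⁻¹ A A) * (subm S A A) + (subm S⁻¹ A Aᶜ) * (subm S Aᶜ A) = 1 ∧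
    (subm S⁻¹ A A) * (subm S A Aᶜ) + (subm S⁻¹ A Aᶜ) * (subm S Aᶜ Aᶜ) = 0 := by
  have h1 : (S⁻¹).submatrix (toV A) (toV A) * S.submatrix (toV A) (toV A) = 1 := by
    rw [Matrix.submatrix_mul_equiv, Matrix.nonsing_inv_mul _ (isUnit_iff_ne_zero.mpr hS.det_pos.ne'),
      Matrix.submatrix_one_equiv]
  rw [submatrix_toV, submatrix_toV, Matrix.fromBlocks_multiply, ← Matrix.fromBlocks_one,
    Matrix.fromBlocks_inj] at h1
  exact ⟨h1.1, h1.2.1⟩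

lemma SK_blocks (hS : S.PosDef) (A : Finset V) :
    (subm S A A) * (subm S⁻¹ A A) + (subm S A Aᶜ) * (subm S⁻¹ Aᶜ A) = 1 ∧
    (subm S Aᶜ A) * (subm S⁻¹ A A) + (subm S Aᶜ Aᶜ) * (subm S⁻¹ Aᶜ A) = 0 := by
  have h1 : S.submatrix (toV A) (toV A) * (S⁻¹).submatrix (toV A) (toV A) = 1 := by
    rw [Matrix.submatrix_mul_equiv, Matrix.mul_nonsing_inv _ (isUnit_iff_ne_zero.mpr hS.det_pos.ne'),
      Matrix.submatrix_one_equiv]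
  rw [submatrix_toV, submatrix_toV, Matrix.fromBlocks_multiply, ← Matrix.fromBlocks_one,
    Matrix.fromBlocks_inj] at h1
  exact ⟨h1.1, h1.2.2.1⟩

lemma K_mul_pcov (hS : S.PosDef) (A : Finset V) : (subm S⁻¹ A A) * (pcov S A) = 1 := by
  obtain ⟨e11, e12⟩ := KS_blocks hS A
  have hT := subm_posDef hS Aᶜ
  have hTT : subm S Aᶜ Aᶜ * (subm S Aᶜ Aᶜ)⁻¹ = 1 :=
    Matrix.mul_nonsing_inv _ (isUnit_iff_ne_zero.mpr hT.det_pos.ne')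
  have h2 : (subm S⁻¹ A A) * (subm S A Aᶜ) * (subm S Aᶜ Aᶜ)⁻¹ = -(subm S⁻¹ A Aᶜ) := by
    have h3 : (subm S⁻¹ A A) * (subm S A Aᶜ) = -((subm S⁻¹ A Aᶜ) * (subm S Aᶜ Aᶜ)) :=
      eq_neg_of_add_eq_zero_left e12
    rw [h3, Matrix.neg_mul, Matrix.mul_assoc, hTT, Matrix.mul_one]
  rw [pcov, pcovOn, Matrix.mul_sub, ← Matrix.mul_assoc, ← Matrix.mul_assoc, h2,
    Matrix.neg_mul, sub_neg_eq_add, e11]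

lemma pcov_inv (hS : S.PosDef) (A : Finset V) : (pcov S A)⁻¹ = subm S⁻¹ A A :=
  Matrix.inv_eq_left_inv (K_mul_pcov hS A)

lemma subm_K_inv (hS : S.PosDef) (A : Finset V) : (subm S⁻¹ A A)⁻¹ = pcov S A :=
  Matrix.inv_eq_right_inv (K_mul_pcov hS A)

lemma pcov_posDef (hS : S.PosDef) (A : Finset V) : (pcov S A).PosDef := by
  rw [← subm_K_inv hS A]
  exact (subm_posDef hS.inv A).inv

lemma det_S_split (hS : S.PosDef) (A : Finset V) :
    S.det = (subm S Aᶜ Aᶜ).det * (pcov S A).det := by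
  have hT := subm_posDef hS Aᶜ
  haveI : Invertible (subm S Aᶜ Aᶜ) :=
    (subm S Aᶜ Aᶜ).invertibleOfIsUnitDet (isUnit_iff_ne_zero.mpr hT.det_pos.ne')
  have h := Matrix.det_submatrix_equiv_self (toV A) S
  rw [submatrix_toV, Matrix.det_fromBlocks₂₂, Matrix.invOf_eq_nonsing_inv] at h
  rw [← h, pcov, pcovOn]

lemma det_subm_K (hS : S.PosDef) (A : Finset V) :
    (subm S⁻¹ A A).det = (subm S Aᶜ Aᶜ).det / S.det := by
  have h1 := congrArg Matrix.det (K_mul_pcov hS A)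
  rw [Matrix.det_mul, Matrix.det_one] at h1
  have h2 := det_S_split hS A
  rw [eq_div_iff hS.det_pos.ne', h2]
  linear_combination (subm S Aᶜ Aᶜ).det * h1
end Schur

instance uniqueSingleton (x : V) : Unique ↥({x} : Finset V) :=
  ⟨⟨⟨x, Finset.mem_singleton_self x⟩⟩, fun a => Subtype.ext (Finset.mem_singleton.mp a.2)⟩

lemma det_singleton_union {S : Matrix V V ℝ} (hS : S.PosDef) {x : V} {B : Finset V}
    (hx : x ∉ B) :
    (subm S ({x} ∪ B) ({x} ∪ B)).det =
      pcovOn S {x} B ⟨x, Finset.mem_singleton_self x⟩ ⟨x, Finset.mem_singleton_self x⟩ *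
        (subm S B B).det := by
  have hd : Disjoint ({x} : Finset V) B := Finset.disjoint_singleton_left.mpr hx
  have hT := subm_posDef hS B
  haveI : Invertible (subm S B B) :=
    (subm S B B).invertibleOfIsUnitDet (isUnit_iff_ne_zero.mpr hT.det_pos.ne')
  have h := Matrix.det_submatrix_equiv_self (unionEquiv {x} B hd) (subm S ({x} ∪ B) ({x} ∪ B))
  rw [submatrix_unionEquiv, Matrix.det_fromBlocks₂₂, Matrix.invOf_eq_nonsing_inv] at h
  rw [← h, ← pcovOn, mul_comm]
  congr 1
  rw [Matrix.det_unique]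
  rfl

lemma subm_conj (K : Matrix V V ℝ) (f : V → ℝ) (A : Finset V) :
    subm (Matrix.diagonal f * K * Matrix.diagonal f) A A =
      Matrix.diagonal (fun i : ↥A => f i.1) * subm K A A *
        Matrix.diagonal (fun i : ↥A => f i.1) := by
  ext i j
  simp [subm, Matrix.mul_diagonal, Matrix.diagonal_mul]

lemma det_conj_subm (K : Matrix V V ℝ) (f : V → ℝ) (A : Finset V) :
    (subm (Matrix.diagonal f * K * Matrix.diagonal f) A A).det
      = (subm K A A).det * ∏ v ∈ A, f v ^ 2 := by
  rw [subm_conj, Matrix.det_mul, Matrix.det_mul, Matrix.det_diagonal,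
    Finset.prod_coe_sort A (fun v => f v),
    show ∏ v ∈ A, f v ^ 2 = (∏ v ∈ A, f v) * ∏ v ∈ A, f v by
      rw [← Finset.prod_mul_distrib]
      exact Finset.prod_congr rfl fun v _ => sq (f v)]
  ring

section CorrScale
variable {ι : Type*} [Fintype ι] [DecidableEq ι]

lemma corrScale_eq (M : Matrix ι ι ℝ) :
    corrScale M = Matrix.diagonal (fun i => (Real.sqrt (M i i))⁻¹) * M *
      Matrix.diagonal (fun i => (Real.sqrt (M i i))⁻¹) := by
  ext i j
  simp [corrScale, Matrix.mul_diagonal, Matrix.diagonal_mul, div_eq_mul_inv, mul_inv]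
  ring

lemma diag_inv (g : ι → ℝ) (hg : ∀ i, g i ≠ 0) :
    (Matrix.diagonal g)⁻¹ = Matrix.diagonal fun i => (g i)⁻¹ :=
  Matrix.inv_eq_left_inv (by
    rw [Matrix.diagonal_mul_diagonal,
      show (fun i => (g i)⁻¹ * g i) = fun _ => (1 : ℝ) from funext fun i => inv_mul_cancel₀ (hg i),
      Matrix.diagonal_one])

lemma corrScale_inv {M : Matrix ι ι ℝ} (hM : M.PosDef) :
    (corrScale M)⁻¹ = Matrix.diagonal (fun i => Real.sqrt (M i i)) * M⁻¹ *
      Matrix.diagonal (fun i => Real.sqrt (M i i)) := by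
  have hg : ∀ i, (Real.sqrt (M i i))⁻¹ ≠ 0 := fun i =>
    inv_ne_zero (Real.sqrt_ne_zero'.mpr (posDef_diag_pos hM i))
  rw [corrScale_eq, Matrix.mul_inv_rev, Matrix.mul_inv_rev, diag_inv _ hg]
  simp only [inv_inv]
  rw [← Matrix.mul_assoc]

lemma corrScale_inv_apply {M : Matrix ι ι ℝ} (hM : M.PosDef) (i j : ι) :
    (corrScale M)⁻¹ i j = Real.sqrt (M i i) * M⁻¹ i j * Real.sqrt (M j j) := by
  rw [corrScale_inv hM]
  simp [Matrix.mul_diagonal, Matrix.diagonal_mul]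

lemma det_corrScale_inv {M : Matrix ι ι ℝ} (hM : M.PosDef) :
    (corrScale M)⁻¹.det = M⁻¹.det * ∏ i, M i i := by
  rw [corrScale_inv hM]
  rw [Matrix.det_mul, Matrix.det_mul, Matrix.det_diagonal]
  have h2 : (∏ i, Real.sqrt (M i i)) * M⁻¹.det * ∏ i, Real.sqrt (M i i)
      = M⁻¹.det * ((∏ i, Real.sqrt (M i i)) * ∏ i, Real.sqrt (M i i)) := by ring
  rw [h2, ← Finset.prod_mul_distrib]
  congr 1
  exact Finset.prod_congr rfl fun i _ => Real.mul_self_sqrt (posDef_diag_pos hM i).le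
end CorrScale

lemma dart_prod {G : SimpleGraph V} {x y : V} (f : V → ℝ) (p : G.Walk x y) :
    (p.darts.map fun d => f d.toProd.1 * f d.toProd.2).prod * (f x * f y)
      = ((p.support.map f).prod) ^ 2 := by
  induction p with
  | nil => simp; ring
  | cons h q ih =>
    simp only [SimpleGraph.Walk.darts_cons, SimpleGraph.Walk.support_cons, List.map_cons,
      List.prod_cons]
    linear_combination (f _) ^ 2 * ih

lemma pcov_diag_entry (S : Matrix V V ℝ) (P : Finset V) {x : V} (hx : x ∈ P) :
    pcov S P ⟨x, hx⟩ ⟨x, hx⟩ =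
      pcovOn S {x} Pᶜ ⟨x, Finset.mem_singleton_self x⟩ ⟨x, Finset.mem_singleton_self x⟩ := by
  simp [pcov, pcovOn, subm, Matrix.sub_apply, Matrix.mul_apply]

lemma attach_prod_eq {α : Type*} (l : List α) (F : {d // d ∈ l} → ℝ) (g : α → ℝ)
    (h : ∀ d : {d // d ∈ l}, F d = g d.1) :
    (l.attach.map F).prod = (l.map g).prod := by
  rw [show F = fun d => g d.1 from funext h, List.attach_map_val]

end Helpers

set_option maxHeartbeats 1600000 in
/-- correlation weight factorization:
`ω(π,Ω) = ω(π, Ω_{[P|P̄]}) × IF_P / √(IF_x^{P̄} · IF_y^{P̄})`. -/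
theorem correlation_weight_factorization {V : Type*} [Fintype V] [DecidableEq V]
    (S : Matrix V V ℝ) (hS : S.PosDef) (G : SimpleGraph V) [DecidableRel G.Adj]
    (hadapt : Adapted S⁻¹ G) {x y : V} (hxy : x ≠ y) (p : G.Walk x y) (hp : p.IsPath) :
    pathWeight (corrScale S) p =
      subPathWeight (corrScale (pcov S p.support.toFinset)) p
          (fun v hv => List.mem_toFinset.mpr hv) *
        (inflF S p.support.toFinset p.support.toFinsetᶜ /
          Real.sqrt (inflF S {x} p.support.toFinsetᶜ * inflF S {y} p.support.toFinsetᶜ)) := by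
  classical
  set P := p.support.toFinset with hP
  have hxP : x ∈ P := by rw [hP]; exact List.mem_toFinset.mpr p.start_mem_support
  have hyP : y ∈ P := by rw [hP]; exact List.mem_toFinset.mpr p.end_mem_support
  have pd : (pcov S P).PosDef := pcov_posDef hS P
  set f : V → ℝ := fun v => Real.sqrt (S v v) with hf
  set D : V → ℝ := fun v => if h : v ∈ P then pcov S P ⟨v, h⟩ ⟨v, h⟩ else 1 with hD
  set fD : V → ℝ := fun v => Real.sqrt (D v) with hfD
  have hSvv : ∀ v, 0 < S v v := fun v => posDef_diag_pos hS v
  have hDpos : ∀ v, 0 < D v := by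
    intro v
    simp only [hD]
    by_cases h : v ∈ P
    · rw [dif_pos h]; exact posDef_diag_pos pd ⟨v, h⟩
    · rw [dif_neg h]; norm_num
  have hfpos : ∀ v, 0 < f v := fun v => by
    simp only [hf]; exact Real.sqrt_pos.mpr (hSvv v)
  have hfDpos : ∀ v, 0 < fD v := fun v => by
    simp only [hfD]; exact Real.sqrt_pos.mpr (hDpos v)
  have hf2 : ∀ v, f v ^ 2 = S v v := fun v => by
    simp only [hf]; exact Real.sq_sqrt (hSvv v).le
  have hfD2 : ∀ v, fD v ^ 2 = D v := fun v => by
    simp only [hfD]; exact Real.sq_sqrt (hDpos v).le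
  have ha : (0:ℝ) < S.det := hS.det_pos
  have haP : (0:ℝ) < (subm S P P).det := (subm_posDef hS P).det_pos
  have haPc : (0:ℝ) < (subm S Pᶜ Pᶜ).det := (subm_posDef hS Pᶜ).det_pos
  have hkP : (subm S⁻¹ P P).det = (subm S Pᶜ Pᶜ).det / S.det := det_subm_K hS P
  have hkPc : (subm S⁻¹ Pᶜ Pᶜ).det = (subm S P P).det / S.det := by
    rw [det_subm_K hS Pᶜ, det_subm_congr S (compl_compl P)]
  have hnodup : p.support.Nodup := hp.support_nodup
  set κ : ℝ := (p.darts.map fun d => S⁻¹ d.toProd.1 d.toProd.2).prod with hκ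
  have dartsplit : ∀ g : V → ℝ, (∀ v, 0 < g v) →
      (p.darts.map fun d => S⁻¹ d.toProd.1 d.toProd.2 * (g d.toProd.1 * g d.toProd.2)).prod
        = κ * ((∏ v ∈ P, g v ^ 2) / (g x * g y)) := by
    intro g hg
    rw [List.prod_map_mul, hκ]
    congr 1
    rw [eq_div_iff (mul_pos (hg x) (hg y)).ne', Finset.prod_pow, hP,
      List.prod_toFinset g hnodup]
    exact dart_prod g p
  have hL : pathWeight (corrScale S) p
      = (-1 : ℝ) ^ (p.support.toFinset.card + 1) * (subm S P P).det * κ / (f x * f y) := by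
    have e1 : (subm (corrScale S)⁻¹ Pᶜ Pᶜ).det
        = (subm S⁻¹ Pᶜ Pᶜ).det * ∏ v ∈ Pᶜ, S v v := by
      rw [corrScale_inv hS, det_conj_subm]
      congr 1
      exact Finset.prod_congr rfl fun v _ => Real.sq_sqrt (hSvv v).le
    have e2 : (corrScale S)⁻¹.det = (S.det)⁻¹ * ∏ v, S v v := by
      rw [det_corrScale_inv hS, Matrix.det_nonsing_inv, Ring.inverse_eq_inv']
    have e3 : (p.darts.map fun d => (corrScale S)⁻¹ d.toProd.1 d.toProd.2).prod
        = κ * ((∏ v ∈ P, S v v) / (f x * f y)) := by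
      rw [show (fun d : G.Dart => (corrScale S)⁻¹ d.toProd.1 d.toProd.2)
          = fun d => S⁻¹ d.toProd.1 d.toProd.2 * (f d.toProd.1 * f d.toProd.2) from
        funext fun d => by rw [corrScale_inv_apply hS]; simp only [hf]; ring]
      rw [dartsplit f hfpos]
      congr 2
      exact Finset.prod_congr rfl fun v _ => hf2 v
    unfold pathWeight
    rw [← hP, e1, e2, e3, hkPc, ← Finset.prod_mul_prod_compl P (fun v => S v v)]
    have h5 : (0:ℝ) < ∏ v ∈ P, S v v := Finset.prod_pos fun v _ => hSvv v
    have h6 : (0:ℝ) < ∏ v ∈ Pᶜ, S v v := Finset.prod_pos fun v _ => hSvv v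
    field_simp [ha.ne', h5.ne', h6.ne', (hfpos x).ne', (hfpos y).ne']
  have eM : (corrScale (pcov S P))⁻¹.det = (subm S⁻¹ P P).det * ∏ v ∈ P, D v := by
    rw [det_corrScale_inv pd, pcov_inv hS P]
    congr 1
    rw [← Finset.prod_coe_sort P D]
    refine Finset.prod_congr rfl fun i _ => ?_
    simp [hD, i.2]
  have eEntry : ∀ (u v : V) (h1 : u ∈ P) (h2 : v ∈ P),
      (corrScale (pcov S P))⁻¹ ⟨u, h1⟩ ⟨v, h2⟩ = S⁻¹ u v * (fD u * fD v) := by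
    intro u v h1 h2
    rw [corrScale_inv_apply pd, pcov_inv hS P]
    have d1 : pcov S P ⟨u, h1⟩ ⟨u, h1⟩ = D u := by simp [hD, h1]
    have d2 : pcov S P ⟨v, h2⟩ ⟨v, h2⟩ = D v := by simp [hD, h2]
    rw [d1, d2]
    simp only [hfD]
    rw [show (subm S⁻¹ P P) ⟨u, h1⟩ ⟨v, h2⟩ = S⁻¹ u v from rfl]
    ring
  have hR : subPathWeight (corrScale (pcov S P)) p (fun v hv => List.mem_toFinset.mpr hv)
      = (-1 : ℝ) ^ (p.support.toFinset.card + 1) * κ / ((subm S⁻¹ P P).det * (fD x * fD y)) := by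
    unfold subPathWeight
    rw [eM]
    rw [attach_prod_eq p.darts _
      (fun dd => S⁻¹ dd.toProd.1 dd.toProd.2 * (fD dd.toProd.1 * fD dd.toProd.2))
      (fun d => eEntry d.1.toProd.1 d.1.toProd.2 _ _)]
    rw [dartsplit fD hfDpos]
    have h7 : ∏ v ∈ P, fD v ^ 2 = ∏ v ∈ P, D v := Finset.prod_congr rfl fun v _ => hfD2 v
    rw [h7]
    have h8 : (0:ℝ) < ∏ v ∈ P, D v := Finset.prod_pos fun v _ => hDpos v
    have h9 : (0:ℝ) < (subm S⁻¹ P P).det := by rw [hkP]; positivity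
    have key : ∀ (a b c d e g : ℝ), b ≠ 0 → c ≠ 0 → d ≠ 0 → e ≠ 0 →
        a * (1/(c*b)) * (g * (b/(d*e))) = a * g / (c * (d*e)) := by
      intro a b c d e g hb hc hd he
      field_simp
    exact key _ _ _ _ _ _ h8.ne' h9.ne' (hfDpos x).ne' (hfDpos y).ne'
  have hIF : inflF S P Pᶜ = (subm S P P).det * (subm S Pᶜ Pᶜ).det / S.det := by
    unfold inflF
    rw [det_subm_congr S (Finset.union_compl P), det_subm_univ]
  have hxPc : x ∉ Pᶜ := by simp [hxP]
  have hyPc : y ∉ Pᶜ := by simp [hyP]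
  have hIFx : inflF S {x} Pᶜ = S x x / D x := by
    unfold inflF
    rw [det_singleton_union hS hxPc, ← pcov_diag_entry S P hxP]
    rw [show (subm S {x} {x}).det = S x x from by rw [Matrix.det_unique]; rfl]
    rw [show pcov S P ⟨x, hxP⟩ ⟨x, hxP⟩ = D x from by simp [hD, hxP]]
    rw [mul_comm (D x) ((subm S Pᶜ Pᶜ).det)]
    rw [mul_comm (S x x) ((subm S Pᶜ Pᶜ).det), mul_div_mul_left _ _ haPc.ne']
  have hIFy : inflF S {y} Pᶜ = S y y / D y := by
    unfold inflF
    rw [det_singleton_union hS hyPc, ← pcov_diag_entry S P hyP]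
    rw [show (subm S {y} {y}).det = S y y from by rw [Matrix.det_unique]; rfl]
    rw [show pcov S P ⟨y, hyP⟩ ⟨y, hyP⟩ = D y from by simp [hD, hyP]]
    rw [mul_comm (D y) ((subm S Pᶜ Pᶜ).det)]
    rw [mul_comm (S y y) ((subm S Pᶜ Pᶜ).det), mul_div_mul_left _ _ haPc.ne']
  have hsqrt : Real.sqrt (inflF S {x} Pᶜ * inflF S {y} Pᶜ) = (f x * f y) / (fD x * fD y) := by
    rw [hIFx, hIFy]
    have hval : S x x / D x * (S y y / D y) = ((f x * f y) / (fD x * fD y)) ^ 2 := by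
      rw [div_pow, mul_pow, mul_pow, hf2, hf2, hfD2, hfD2, div_mul_div_comm]
    rw [hval, Real.sqrt_sq (le_of_lt (div_pos (mul_pos (hfpos x) (hfpos y))
      (mul_pos (hfDpos x) (hfDpos y))))]
  rw [hL, hR, hIF, hsqrt, hkP]
  field_simp [ha.ne', haPc.ne', (hfpos x).ne', (hfpos y).ne', (hfDpos x).ne', (hfDpos y).ne']
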